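/- The family Binomial(n, 1/n), n ≥ 1, is convexly increasing in n: for every n ≥ 1 and every convex f : ℝ → ℝ, E[f(Binomial(n,1/n))] ≤ E[f(Binomial(n+1,1/(n+1)))], whenever both expectations are finite. -/

import Mathlib

open MeasureTheory Finset

open Finset

/-- (n²-1)^m (n²+m) ≤ n^(2m+2) -/
lemma lemE (n : ℕ) (hn : 1 ≤ n) : ∀ m : ℕ,
    ((n:ℝ)^2 - 1)^m * ((n:ℝ)^2 + m) ≤ (n:ℝ)^(2*m+2) := by
  have hn1 : (1:ℝ) ≤ (n:ℝ) := by exact_mod_cast hn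
  have h0 : (0:ℝ) ≤ (n:ℝ)^2 - 1 := by nlinarith
  intro m
  induction m with
  | zero => simp
  | succ m ih =>
      have key : ((n:ℝ)^2 - 1) * ((n:ℝ)^2 + (m+1)) ≤ (n:ℝ)^2 * ((n:ℝ)^2 + m) := by
        push_cast; nlinarith
      have h1 : ((n:ℝ)^2 - 1)^(m+1) * ((n:ℝ)^2 + (m+1))
          = ((n:ℝ)^2 - 1)^m * (((n:ℝ)^2 - 1) * ((n:ℝ)^2 + (m+1))) := by
        push_cast; ring
      have h2 : ((n:ℝ)^2 - 1)^m * (((n:ℝ)^2 - 1) * ((n:ℝ)^2 + (m+1)))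
          ≤ ((n:ℝ)^2 - 1)^m * ((n:ℝ)^2 * ((n:ℝ)^2 + m)) := by
        apply mul_le_mul_of_nonneg_left key (pow_nonneg h0 m)
      have h3 : ((n:ℝ)^2 - 1)^m * ((n:ℝ)^2 * ((n:ℝ)^2 + m))
          = (n:ℝ)^2 * (((n:ℝ)^2 - 1)^m * ((n:ℝ)^2 + m)) := by ring
      have h4 : (n:ℝ)^2 * (((n:ℝ)^2 - 1)^m * ((n:ℝ)^2 + m)) ≤ (n:ℝ)^2 * (n:ℝ)^(2*m+2) := by
        apply mul_le_mul_of_nonneg_left ih (by positivity)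
      calc ((n:ℝ)^2 - 1)^(m+1) * ((n:ℝ)^2 + (m+1:ℕ)) 
          = ((n:ℝ)^2 - 1)^m * (((n:ℝ)^2 - 1) * ((n:ℝ)^2 + (m+1))) := by push_cast; ring
        _ ≤ ((n:ℝ)^2 - 1)^m * ((n:ℝ)^2 * ((n:ℝ)^2 + m)) := h2
        _ = (n:ℝ)^2 * (((n:ℝ)^2 - 1)^m * ((n:ℝ)^2 + m)) := by ring
        _ ≤ (n:ℝ)^2 * (n:ℝ)^(2*m+2) := h4
        _ = (n:ℝ)^(2*(m+1)+2) := by ring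
/-- H(k): (n+1-k)(n+1)^k ≤ n^(k-1)(n²+n-k) for 3 ≤ k ≤ n, real form -/
lemma lemH (n : ℕ) : ∀ k : ℕ, 3 ≤ k → k ≤ n →
    ((n:ℝ) + 1 - k) * ((n:ℝ)+1)^k ≤ (n:ℝ)^(k-1) * ((n:ℝ)^2 + n - k) := by
  intro k
  induction k with
  | zero => intro h; omega
  | succ k ih =>
      intro h3 hkn
      rcases Nat.lt_or_ge k 3 with hk3 | hk3
      · -- k+1 = 3, k = 2
        interval_cases k
        · omega
        · omega
        · -- k = 2: base case: (n-2)(n+1)^3 ≤ n^2 (n^2+n-3)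
          have hn3 : (3:ℝ) ≤ (n:ℝ) := by exact_mod_cast hkn
          push_cast
          norm_num
          nlinarith [hn3]
      · -- step: k ≥ 3, k+1 ≤ n
        have hkn' : k ≤ n := by omega
        have IH := ih hk3 hkn'
        have hnk : (k:ℝ) ≤ (n:ℝ) := by exact_mod_cast hkn'
        have hk3' : (3:ℝ) ≤ (k:ℝ) := by exact_mod_cast hk3
        have hn1k : (0:ℝ) < (n:ℝ) + 1 - k := by linarith
        have hnpos : (0:ℝ) < (n:ℝ) := by linarith
        -- key: (n+1)(n-k)(n²+n-k) ≤ n(n+1-k)(n²+n-k-1)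
        have key : ((n:ℝ)+1) * ((n:ℝ) - k) * ((n:ℝ)^2 + n - k)
            ≤ (n:ℝ) * ((n:ℝ)+1-k) * ((n:ℝ)^2 + n - (k+1)) := by
          nlinarith [hnk, hk3', sq_nonneg ((n:ℝ) - k)]
        -- (n-k)(n+1)^(k+1) = (n+1)(n-k)(n+1)^k ≤ (n+1)(n-k)/(n+1-k) * n^(k-1)(n²+n-k)
        have h1 : ((n:ℝ) - k) * ((n:ℝ)+1)^(k+1)
            = (((n:ℝ)+1) * ((n:ℝ) - k) / ((n:ℝ)+1-k)) * ((((n:ℝ)+1-k)) * ((n:ℝ)+1)^k) := by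
          field_simp
          ring
        have hfrac : (0:ℝ) ≤ ((n:ℝ)+1) * ((n:ℝ) - k) / ((n:ℝ)+1-k) := by
          apply div_nonneg _ (le_of_lt hn1k)
          nlinarith
        have h2 : ((n:ℝ) - k) * ((n:ℝ)+1)^(k+1)
            ≤ (((n:ℝ)+1) * ((n:ℝ) - k) / ((n:ℝ)+1-k)) * ((n:ℝ)^(k-1) * ((n:ℝ)^2 + n - k)) := by
          rw [h1]; exact mul_le_mul_of_nonneg_left IH hfrac
        have h3' : (((n:ℝ)+1) * ((n:ℝ) - k) / ((n:ℝ)+1-k)) * ((n:ℝ)^(k-1) * ((n:ℝ)^2 + n - k))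
            ≤ (n:ℝ)^k * ((n:ℝ)^2 + n - (k+1)) := by
          rw [div_mul_eq_mul_div, div_le_iff₀ hn1k]
          have hne : (n:ℝ)^k = (n:ℝ)^(k-1) * n := by
            rw [← pow_succ]; congr 1; omega
          rw [hne]
          have hp : (0:ℝ) ≤ (n:ℝ)^(k-1) := by positivity
          nlinarith [key, hp]
        have : ((n:ℝ) + 1 - (k+1)) = ((n:ℝ) - k) := by push_cast; ring
        rw [show ((k:ℕ)+1) - 1 = k from rfl]
        push_cast
        calc ((n:ℝ) + 1 - (k+1)) * ((n:ℝ)+1)^(k+1) = ((n:ℝ) - k) * ((n:ℝ)+1)^(k+1) := by ring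
          _ ≤ _ := le_trans h2 h3'
          _ = (n:ℝ)^k * ((n:ℝ)^2 + n - (k+1)) := rfl
/-- cubic truncation lower bound: (1-y)^m ≥ 1 - my + C(m,2)y² - C(m,3)y³ for y ∈ [0,1] -/
lemma lemP (y : ℝ) (hy0 : 0 ≤ y) (hy1 : y ≤ 1) : ∀ m : ℕ,
    1 - m*y + (m*(m-1))/2 * y^2 - (m*(m-1)*(m-2))/6 * y^3 ≤ (1-y)^m := by
  intro m
  induction m with
  | zero => norm_num
  | succ m ih =>
      have key : (1-y) * (1 - m*y + (m*(m-1))/2 * y^2 - (m*(m-1)*(m-2))/6 * y^3)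
          = (1 - (m+1)*y + ((m+1)*((m+1)-1))/2 * y^2 - ((m+1)*((m+1)-1)*((m+1)-2))/6 * y^3)
            + (m*(m-1)*(m-2))/6 * y^4 := by ring
      have h1y : (0:ℝ) ≤ 1 - y := by linarith
      rcases le_or_gt 0 (1 - m*y + (m*(m-1))/2 * y^2 - (m*(m-1)*(m-2))/6 * y^3) with hP | hP
      · have h2 : (1-y) * (1 - m*y + (m*(m-1))/2 * y^2 - (m*(m-1)*(m-2))/6 * y^3) ≤ (1-y)^(m+1) := by
          have hps : (1-y)^(m+1) = (1-y)*(1-y)^m := by ring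
          rw [hps]
          exact mul_le_mul_of_nonneg_left ih h1y
        have hcy : (0:ℝ) ≤ (m*(m-1)*(m-2))/6 * y^4 := by
          rcases Nat.lt_or_ge m 2 with hm | hm
          · interval_cases m <;> norm_num
          · have hm2 : (2:ℝ) ≤ (m:ℝ) := by exact_mod_cast hm
            have h6 : (0:ℝ) ≤ ((m:ℝ)*((m:ℝ)-1)*((m:ℝ)-2))/6 := by
              apply div_nonneg _ (by norm_num)
              apply mul_nonneg (mul_nonneg (by linarith) (by linarith)) (by linarith)
            exact mul_nonneg h6 (by positivity)
        push_cast
        push_cast at key h2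
        nlinarith [key, h2, hcy]
      · have hcy : (0:ℝ) ≤ (m*(m-1)*(m-2))/6 * y^4 := by
          rcases Nat.lt_or_ge m 2 with hm | hm
          · interval_cases m <;> norm_num
          · have hm2 : (2:ℝ) ≤ (m:ℝ) := by exact_mod_cast hm
            have h6 : (0:ℝ) ≤ ((m:ℝ)*((m:ℝ)-1)*((m:ℝ)-2))/6 := by
              apply div_nonneg _ (by norm_num)
              apply mul_nonneg (mul_nonneg (by linarith) (by linarith)) (by linarith)
            exact mul_nonneg h6 (by positivity)
        have hpow : (0:ℝ) ≤ (1-y)^(m+1) := pow_nonneg h1y _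
        have hneg : (1-y) * (1 - m*y + (m*(m-1))/2 * y^2 - (m*(m-1)*(m-2))/6 * y^3) ≤ 0 :=
          mul_nonpos_of_nonneg_of_nonpos h1y (le_of_lt hP)
        push_cast
        push_cast at key hneg
        nlinarith [key, hneg, hcy, hpow]
/-- Claim A': n^(2n+1-k) ≥ (n+1-k)(n-1)^(n-k)(n+1)^n for 3 ≤ k ≤ n -/
lemma claimA' (n k : ℕ) (h3 : 3 ≤ k) (hkn : k ≤ n) :
    ((n:ℝ)+1-k) * ((n:ℝ)-1)^(n-k) * ((n:ℝ)+1)^n ≤ (n:ℝ)^(2*n+1-k) := by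
  have hn3 : 3 ≤ n := le_trans h3 hkn
  have hnR : (3:ℝ) ≤ (n:ℝ) := by exact_mod_cast hn3
  have hkR : (k:ℝ) ≤ (n:ℝ) := by exact_mod_cast hkn
  set m := n - k with hm
  have hmk : n = k + m := by omega
  have hcast : ((m:ℕ):ℝ) = (n:ℝ) - k := by
    rw [hm]
    exact Nat.cast_sub hkn
  have hD : (0:ℝ) < (n:ℝ)^2 + n - k := by nlinarith
  -- multiply target by (n²+n-k)
  rw [← mul_le_mul_iff_left₀ hD]
  have e1 : ((n:ℝ)+1)^n = ((n:ℝ)+1)^k * ((n:ℝ)+1)^m := by rw [← pow_add, ← hmk]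
  have e2 : ((n:ℝ)-1)^m * ((n:ℝ)+1)^m = ((n:ℝ)^2-1)^m := by
    rw [← mul_pow]; congr 1; ring
  have hEm := lemE n (by omega) m
  have hEm' : ((n:ℝ)^2 - 1)^m * ((n:ℝ)^2 + n - k) ≤ (n:ℝ)^(2*m+2) := by
    have : (n:ℝ)^2 + (m:ℝ) = (n:ℝ)^2 + n - k := by rw [hcast]; ring
    rwa [this] at hEm
  have hH := lemH n k h3 hkn
  have hnn : (0:ℝ) ≤ (n:ℝ) := by linarith
  have h1k : (0:ℝ) ≤ (n:ℝ)+1-k := by linarith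
  have hpk : (0:ℝ) ≤ ((n:ℝ)+1)^k := by positivity
  calc ((n:ℝ)+1-k) * ((n:ℝ)-1)^(n-k) * ((n:ℝ)+1)^n * ((n:ℝ)^2 + n - k)
      = (((n:ℝ)+1-k) * ((n:ℝ)+1)^k) * (((n:ℝ)^2-1)^m * ((n:ℝ)^2 + n - k)) := by
        rw [e1, ← e2, ← hm]; ring
    _ ≤ (((n:ℝ)+1-k) * ((n:ℝ)+1)^k) * (n:ℝ)^(2*m+2) := by
        apply mul_le_mul_of_nonneg_left hEm' (mul_nonneg h1k hpk)
    _ ≤ ((n:ℝ)^(k-1) * ((n:ℝ)^2 + n - k)) * (n:ℝ)^(2*m+2) := by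
        apply mul_le_mul_of_nonneg_right hH (by positivity)
    _ = (n:ℝ)^(2*n+1-k) * ((n:ℝ)^2 + n - k) := by
        have hexp : (k-1) + (2*m+2) = 2*n+1-k := by omega
        rw [← hexp, pow_add]
        ring

/-- Claim B: (2n+1) n^(2n) ≤ (2n-1)(n-1)^(n-1)(n+1)^(n+1) for n ≥ 1 -/
lemma claimB (n : ℕ) (hn : 1 ≤ n) :
    (2*(n:ℝ)+1) * (n:ℝ)^(2*n) ≤ (2*(n:ℝ)-1) * ((n:ℝ)-1)^(n-1) * ((n:ℝ)+1)^(n+1) := by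
  have hnR : (1:ℝ) ≤ (n:ℝ) := by exact_mod_cast hn
  have hnpos : (0:ℝ) < (n:ℝ) := by linarith
  set m := n - 1 with hm
  have hmn : n = m + 1 := by omega
  have hcast : ((m:ℕ):ℝ) = (n:ℝ) - 1 := by rw [hm, Nat.cast_sub hn, Nat.cast_one]
  set y : ℝ := 1/(n:ℝ)^2 with hy
  have hy0 : 0 ≤ y := by positivity
  have hy1 : y ≤ 1 := by rw [hy]; rw [div_le_one (by positivity)]; nlinarith
  have hP := lemP y hy0 hy1 m
  -- (n²-1)^m = n^(2m) (1-y)^m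
  have e1 : ((n:ℝ)^2-1)^m = (n:ℝ)^(2*m) * (1-y)^m := by
    rw [pow_mul, ← mul_pow]
    congr 1
    rw [hy]; field_simp
  have e2 : ((n:ℝ)-1)^(n-1) * ((n:ℝ)+1)^(n+1) = ((n:ℝ)+1)^2 * ((n:ℝ)^2-1)^m := by
    have : ((n:ℝ)+1)^(n+1) = ((n:ℝ)+1)^m * ((n:ℝ)+1)^2 := by
      rw [← pow_add]
      exact congrArg (fun e => ((n:ℝ)+1)^e) (by omega)
    have h3 : ((n:ℝ)^2-1)^m = ((n:ℝ)-1)^m * ((n:ℝ)+1)^m := by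
      rw [← mul_pow]; congr 1; ring
    rw [this, h3]; ring
  -- key polynomial inequality
  have hkey : (2*(n:ℝ)+1) * (n:ℝ)^2
      ≤ (2*(n:ℝ)-1) * ((n:ℝ)+1)^2 * (1 - m*y + (m*(m-1))/2 * y^2 - (m*(m-1)*(m-2))/6 * y^3) := by
    rw [hcast, hy]
    have h6 : (0:ℝ) < (n:ℝ)^6 := by positivity
    rw [← sub_nonneg]
    have expand : (2*(n:ℝ)-1) * ((n:ℝ)+1)^2 *
        (1 - ((n:ℝ)-1)*(1/(n:ℝ)^2) + (((n:ℝ)-1)*(((n:ℝ)-1)-1))/2 * (1/(n:ℝ)^2)^2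
          - (((n:ℝ)-1)*(((n:ℝ)-1)-1)*(((n:ℝ)-1)-2))/6 * (1/(n:ℝ)^2)^3)
        - (2*(n:ℝ)+1) * (n:ℝ)^2
        = ((n:ℝ)^6 + 5*(n:ℝ)^4 - 11*(n:ℝ)^3 + 6*(n:ℝ)^2 + 11*(n:ℝ) - 6) / (6*(n:ℝ)^6) := by
      field_simp
      ring
    rw [expand]
    apply div_nonneg _ (by positivity)
    nlinarith [hnR, sq_nonneg ((n:ℝ)-1), sq_nonneg ((n:ℝ)^2-1), sq_nonneg ((n:ℝ)^2-2*n), pow_pos hnpos 3, pow_pos hnpos 6]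
  -- assemble
  have h2m : (n:ℝ)^(2*n) = (n:ℝ)^(2*m) * (n:ℝ)^2 := by
    rw [← pow_add]
    exact congrArg (fun e => (n:ℝ)^e) (by omega)
  have hmono : (n:ℝ)^(2*m) * ((2*(n:ℝ)+1) * (n:ℝ)^2)
      ≤ (n:ℝ)^(2*m) * ((2*(n:ℝ)-1) * ((n:ℝ)+1)^2 * (1 - m*y + (m*(m-1))/2 * y^2 - (m*(m-1)*(m-2))/6 * y^3)) :=
    mul_le_mul_of_nonneg_left hkey (by positivity)
  have h2n1 : (0:ℝ) ≤ (2*(n:ℝ)-1) * ((n:ℝ)+1)^2 := by nlinarith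
  have hfin : (n:ℝ)^(2*m) * ((2*(n:ℝ)-1) * ((n:ℝ)+1)^2 * (1 - m*y + (m*(m-1))/2 * y^2 - (m*(m-1)*(m-2))/6 * y^3))
      ≤ (2*(n:ℝ)-1) * ((n:ℝ)+1)^2 * ((n:ℝ)^2-1)^m := by
    rw [e1]
    have := mul_le_mul_of_nonneg_left hP h2n1
    calc (n:ℝ)^(2*m) * ((2*(n:ℝ)-1) * ((n:ℝ)+1)^2 * (1 - m*y + (m*(m-1))/2 * y^2 - (m*(m-1)*(m-2))/6 * y^3))
        = (n:ℝ)^(2*m) * ((2*(n:ℝ)-1) * ((n:ℝ)+1)^2 * (1 - (m:ℝ)*y + ((m:ℝ)*((m:ℝ)-1))/2 * y^2 - ((m:ℝ)*((m:ℝ)-1)*((m:ℝ)-2))/6 * y^3)) := rfl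
      _ ≤ (n:ℝ)^(2*m) * ((2*(n:ℝ)-1) * ((n:ℝ)+1)^2 * (1-y)^m) := by
          apply mul_le_mul_of_nonneg_left this (by positivity)
      _ = (2*(n:ℝ)-1) * ((n:ℝ)+1)^2 * ((n:ℝ)^(2*m) * (1-y)^m) := by ring
  calc (2*(n:ℝ)+1) * (n:ℝ)^(2*n) = (n:ℝ)^(2*m) * ((2*(n:ℝ)+1) * (n:ℝ)^2) := by rw [h2m]; ring
    _ ≤ _ := le_trans hmono hfin
    _ = (2*(n:ℝ)-1) * ((n:ℝ)+1)^2 * ((n:ℝ)^2-1)^m := by rw [e1]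
    _ = (2*(n:ℝ)-1) * (((n:ℝ)-1)^(n-1) * ((n:ℝ)+1)^(n+1)) := by rw [e2]; ring
    _ = (2*(n:ℝ)-1) * ((n:ℝ)-1)^(n-1) * ((n:ℝ)+1)^(n+1) := by ring
noncomputable def bp (m : ℕ) (x : ℝ) (k : ℕ) : ℝ := (m.choose k : ℝ) * x^k * (1-x)^(m-k)

lemma bp_nonneg (m : ℕ) (x : ℝ) (h0 : 0 ≤ x) (h1 : x ≤ 1) (k : ℕ) : 0 ≤ bp m x k := by
  unfold bp
  have : (0:ℝ) ≤ 1 - x := by linarith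
  positivity

lemma bp_zero_of_gt (m k : ℕ) (x : ℝ) (h : m < k) : bp m x k = 0 := by
  unfold bp
  rw [Nat.choose_eq_zero_of_lt h]
  norm_num

lemma bp_sum (m : ℕ) (x : ℝ) : ∑ k ∈ range (m+1), bp m x k = 1 := by
  simp only [bp]
  calc ∑ k ∈ range (m+1), (m.choose k : ℝ) * x^k * (1-x)^(m-k)
      = ∑ k ∈ range (m+1), x^k * (1-x)^(m-k) * (m.choose k : ℝ) := by
        apply sum_congr rfl; intro k _; ring
    _ = (x + (1-x))^m := (add_pow x (1-x) m).symm
    _ = 1 := by norm_num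

lemma bp_mean (r : ℕ) (x : ℝ) :
    ∑ k ∈ range (r+2), (k:ℝ) * bp (r+1) x k = (r+1) * x := by
  simp only [bp]
  rw [Finset.sum_range_succ']
  have hterm : ∀ k, (((k:ℕ)+1:ℕ):ℝ) * (((r+1).choose (k+1) : ℝ) * x^(k+1) * (1-x)^(r+1-(k+1)))
      = ((r:ℝ)+1) * x * ((r.choose k : ℝ) * x^k * (1-x)^(r-k)) := by
    intro k
    have hid : ((r+1).choose (k+1) : ℝ) * ((k:ℝ)+1) = ((r:ℝ)+1) * (r.choose k : ℝ) := by
      have := Nat.add_one_mul_choose_eq r k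
      have h2 : ((r.succ * r.choose k : ℕ) : ℝ) = (((r+1).choose (k+1) * (k+1) : ℕ) : ℝ) := by
        exact_mod_cast congrArg (Nat.cast : ℕ → ℝ) this
      push_cast at h2
      linarith
    have hsub : r + 1 - (k+1) = r - k := by omega
    rw [hsub]
    push_cast
    linear_combination (x^(k+1) * (1-x)^(r-k)) * hid
  calc (∑ k ∈ range (r+1), (((k:ℕ)+1:ℕ):ℝ) * (((r+1).choose (k+1) : ℝ) * x^(k+1) * (1-x)^(r+1-(k+1))))
        + ((0:ℕ):ℝ) * (((r+1).choose 0 : ℝ) * x^0 * (1-x)^(r+1-0))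
      = ∑ k ∈ range (r+1), ((r:ℝ)+1) * x * ((r.choose k : ℝ) * x^k * (1-x)^(r-k)) := by
        rw [sum_congr rfl (fun k _ => hterm k)]
        norm_num
    _ = ((r:ℝ)+1) * x * ∑ k ∈ range (r+1), (r.choose k : ℝ) * x^k * (1-x)^(r-k) := by
        rw [mul_sum]
    _ = ((r:ℝ)+1) * x := by
        have := bp_sum r x
        simp only [bp] at this
        rw [this, mul_one]
lemma bp_val (n : ℕ) (hn : 1 ≤ n) (k : ℕ) (hk : k ≤ n) :
    bp n (1/(n:ℝ)) k = (n.choose k : ℝ) * ((n:ℝ)-1)^(n-k) / (n:ℝ)^n := by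
  have hnpos : (0:ℝ) < (n:ℝ) := by exact_mod_cast hn
  unfold bp
  have h1 : (1:ℝ) - 1/(n:ℝ) = ((n:ℝ)-1)/(n:ℝ) := by field_simp
  have hkn2 : k + (n - k) = n := by omega
  have h2 : (1/(n:ℝ))^k * ((((n:ℝ)-1))/(n:ℝ))^(n-k) = ((n:ℝ)-1)^(n-k) / (n:ℝ)^n := by
    rw [div_pow, div_pow, div_mul_div_comm, one_pow, one_mul, ← pow_add, hkn2]
  rw [h1, mul_assoc, h2, mul_div_assoc]

lemma claimA_pmf (n : ℕ) (hn : 1 ≤ n) (k : ℕ) (h3 : 3 ≤ k) :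
    bp n (1/(n:ℝ)) k ≤ bp (n+1) (1/((n:ℝ)+1)) k := by
  have hnpos : (0:ℝ) < (n:ℝ) := by exact_mod_cast hn
  have hq0 : (0:ℝ) ≤ 1/((n:ℝ)+1) := by positivity
  have hq1 : 1/((n:ℝ)+1) ≤ 1 := by rw [div_le_one (by linarith)]; linarith
  rcases Nat.lt_or_ge n k with h | hkn
  · -- k > n : bp n _ k = 0
    have : bp n (1/(n:ℝ)) k = 0 := by
      unfold bp; rw [Nat.choose_eq_zero_of_lt h]; norm_num
    rw [this]
    have : ((n:ℝ)+1) = ((n+1:ℕ):ℝ) := by push_cast; ring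
    rw [this]
    exact bp_nonneg (n+1) _ (by positivity) (by rw [div_le_one (by positivity)]; push_cast; linarith) k
  · -- 3 ≤ k ≤ n
    have hv1 : bp n (1/(n:ℝ)) k = (n.choose k : ℝ) * ((n:ℝ)-1)^(n-k) / (n:ℝ)^n :=
      bp_val n hn k hkn
    have hv2 : bp (n+1) (1/((n:ℝ)+1)) k
        = ((n+1).choose k : ℝ) * ((n:ℝ))^(n+1-k) / ((n:ℝ)+1)^(n+1) := by
      have h1 : ((n:ℝ)+1) = ((n+1:ℕ):ℝ) := by push_cast; ring
      rw [h1]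
      have := bp_val (n+1) (by omega) k (by omega)
      rw [this]
      push_cast
      norm_num
    rw [hv1, hv2]
    rw [div_le_div_iff₀ (by positivity) (by positivity)]
    -- goal: C(n,k) (n-1)^(n-k) (n+1)^(n+1) ≤ C(n+1,k) n^(n+1-k) n^n
    have hchoose : ((n+1).choose k : ℝ) * ((n:ℝ)+1-k) = ((n:ℝ)+1) * (n.choose k : ℝ) := by
      have h := Nat.choose_mul_succ_eq n k
      have h2 : ((n.choose k * (n+1) : ℕ):ℝ) = (((n+1).choose k * (n+1-k) : ℕ):ℝ) := by
        exact_mod_cast congrArg (Nat.cast : ℕ → ℝ) h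
      push_cast [Nat.cast_sub (show k ≤ n+1 by omega)] at h2
      push_cast
      linarith
    have hA := claimA' n k h3 hkn
    have hCpos : (0:ℝ) ≤ ((n+1).choose k : ℝ) := by positivity
    have hmul := mul_le_mul_of_nonneg_left hA hCpos
    -- LHS of hmul: C(n+1,k)(n+1-k)(n-1)^(n-k)(n+1)^n = (n+1)C(n,k)(n-1)^(n-k)(n+1)^n
    have e1 : ((n+1).choose k : ℝ) * (((n:ℝ)+1-k) * ((n:ℝ)-1)^(n-k) * ((n:ℝ)+1)^n)
        = ((n.choose k : ℝ) * ((n:ℝ)-1)^(n-k)) * (((n:ℝ)+1)^n * ((n:ℝ)+1)) := by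
      calc ((n+1).choose k : ℝ) * (((n:ℝ)+1-k) * ((n:ℝ)-1)^(n-k) * ((n:ℝ)+1)^n)
          = (((n+1).choose k : ℝ) * ((n:ℝ)+1-k)) * (((n:ℝ)-1)^(n-k) * ((n:ℝ)+1)^n) := by ring
        _ = (((n:ℝ)+1) * (n.choose k : ℝ)) * (((n:ℝ)-1)^(n-k) * ((n:ℝ)+1)^n) := by rw [hchoose]
        _ = _ := by ring
    have e2 : ((n:ℝ)+1)^n * ((n:ℝ)+1) = ((n:ℝ)+1)^(n+1) := by rw [← pow_succ]
    have e3 : (n:ℝ)^(n+1-k) * (n:ℝ)^n = (n:ℝ)^(2*n+1-k) := by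
      rw [← pow_add]; congr 1; omega
    calc (n.choose k : ℝ) * ((n:ℝ)-1)^(n-k) * ((n:ℝ)+1)^(n+1)
        = ((n+1).choose k : ℝ) * (((n:ℝ)+1-k) * ((n:ℝ)-1)^(n-k) * ((n:ℝ)+1)^n) := by
          rw [e1, e2]
          try ring
      _ ≤ ((n+1).choose k : ℝ) * (n:ℝ)^(2*n+1-k) := hmul
      _ = ((n+1).choose k : ℝ) * ((n:ℝ)^(n+1-k) * (n:ℝ)^n) := by rw [e3]
      _ = ((n+1).choose k : ℝ) * (n:ℝ)^(n+1-k) * (n:ℝ)^n := by ring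

lemma claimB_pmf (n : ℕ) (hn : 1 ≤ n) :
    bp (n+1) (1/((n:ℝ)+1)) 0 + bp (n+1) (1/((n:ℝ)+1)) 1
      ≤ bp n (1/(n:ℝ)) 0 + bp n (1/(n:ℝ)) 1 := by
  have hnpos : (0:ℝ) < (n:ℝ) := by exact_mod_cast hn
  have h1 : ((n:ℝ)+1) = ((n+1:ℕ):ℝ) := by push_cast; ring
  have hv0 : bp n (1/(n:ℝ)) 0 = ((n:ℝ)-1)^n / (n:ℝ)^n := by
    rw [bp_val n hn 0 (by omega)]; norm_num
  have hv1 : bp n (1/(n:ℝ)) 1 = (n:ℝ) * ((n:ℝ)-1)^(n-1) / (n:ℝ)^n := by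
    rw [bp_val n hn 1 hn]; norm_num
  have hw0 : bp (n+1) (1/((n:ℝ)+1)) 0 = (n:ℝ)^(n+1) / ((n:ℝ)+1)^(n+1) := by
    rw [h1, bp_val (n+1) (by omega) 0 (by omega)]
    push_cast; norm_num
  have hw1 : bp (n+1) (1/((n:ℝ)+1)) 1 = ((n:ℝ)+1) * (n:ℝ)^n / ((n:ℝ)+1)^(n+1) := by
    rw [h1, bp_val (n+1) (by omega) 1 (by omega)]
    push_cast; norm_num
  rw [hv0, hv1, hw0, hw1]
  rw [← add_div, ← add_div]
  rw [div_le_div_iff₀ (by positivity) (by positivity)]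
  -- ((n)^(n+1) + (n+1) n^n) * n^n ≤ ((n-1)^n + n (n-1)^(n-1)) * (n+1)^(n+1)
  have hB := claimB n hn
  have e1 : ((n:ℝ)-1)^n = ((n:ℝ)-1)^(n-1) * ((n:ℝ)-1) := by
    rw [← pow_succ]
    congr 1
    omega
  have e2 : (n:ℝ)^(n+1) = (n:ℝ)^n * (n:ℝ) := by rw [← pow_succ]
  have e3 : (n:ℝ)^n * (n:ℝ)^n = (n:ℝ)^(2*n) := by rw [← pow_add]; congr 1; omega
  calc ((n:ℝ)^(n+1) + ((n:ℝ)+1) * (n:ℝ)^n) * (n:ℝ)^n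
      = (2*(n:ℝ)+1) * (n:ℝ)^(2*n) := by rw [e2, ← e3]; ring
    _ ≤ (2*(n:ℝ)-1) * ((n:ℝ)-1)^(n-1) * ((n:ℝ)+1)^(n+1) := hB
    _ = (((n:ℝ)-1)^n + (n:ℝ) * ((n:ℝ)-1)^(n-1)) * ((n:ℝ)+1)^(n+1) := by rw [e1]; ring
lemma tele (f : ℕ → ℝ) : ∀ k : ℕ, ∑ j ∈ Ico 1 (k+1), (f (j+1) - 2*f j + f (j-1))
    = f (k+1) - f k - (f 1 - f 0) := by
  intro k
  induction k with
  | zero => simp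
  | succ k ih =>
      rw [Finset.sum_Ico_succ_top (by omega)]
      rw [ih]
      have : k + 1 - 1 = k := by omega
      rw [this]
      ring

lemma taylor (f : ℕ → ℝ) (K : ℕ) : ∀ k : ℕ, k ≤ K →
    f k = f 0 + k*(f 1 - f 0)
      + ∑ j ∈ Ico 1 K, ((k - j : ℕ):ℝ) * (f (j+1) - 2*f j + f (j-1)) := by
  intro k
  induction k with
  | zero =>
      intro _
      rw [Finset.sum_eq_zero]
      · norm_num
      · intro j hj
        simp only [mem_Ico] at hj
        have : 0 - j = 0 := by omega
        rw [this]
        norm_num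
  | succ k ih =>
      intro hk
      have hkK : k ≤ K := by omega
      have IH := ih hkK
      have hsplit : ∑ j ∈ Ico 1 K, (((k+1) - j : ℕ):ℝ) * (f (j+1) - 2*f j + f (j-1))
          = (∑ j ∈ Ico 1 K, ((k - j : ℕ):ℝ) * (f (j+1) - 2*f j + f (j-1)))
            + ∑ j ∈ Ico 1 (k+1), (f (j+1) - 2*f j + f (j-1)) := by
        have hsub : Ico 1 (k+1) = (Ico 1 K).filter (fun j => j < k+1) := by
          ext j
          simp only [mem_Ico, mem_filter]
          omega
        rw [hsub, Finset.sum_filter, ← Finset.sum_add_distrib]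
        apply sum_congr rfl
        intro j hj
        simp only [mem_Ico] at hj
        by_cases hjk : j < k + 1
        · have h1 : (k+1) - j = (k - j) + 1 := by omega
          rw [if_pos hjk, h1]
          push_cast
          ring
        · have h1 : (k+1) - j = 0 := by omega
          have h2 : k - j = 0 := by omega
          rw [if_neg hjk, h1, h2]
          norm_num
      rw [hsplit, tele f k]
      push_cast
      linarith [IH]
lemma sum_ineq (n : ℕ) (hn : 1 ≤ n) (f : ℕ → ℝ)
    (hconv : ∀ j : ℕ, 1 ≤ j → 0 ≤ f (j+1) - 2*f j + f (j-1)) :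
    ∑ k ∈ range (n+2), bp n (1/(n:ℝ)) k * f k
      ≤ ∑ k ∈ range (n+2), bp (n+1) (1/((n:ℝ)+1)) k * f k := by
  have hnpos : (0:ℝ) < (n:ℝ) := by exact_mod_cast hn
  set p : ℝ := 1/(n:ℝ) with hp
  set q : ℝ := 1/((n:ℝ)+1) with hq
  -- sums equal 1
  have hsum1 : ∑ k ∈ range (n+2), bp n p k = 1 := by
    rw [Finset.sum_range_succ, bp_zero_of_gt n (n+1) p (by omega), add_zero]
    exact bp_sum n p
  have hsum2 : ∑ k ∈ range (n+2), bp (n+1) q k = 1 := bp_sum (n+1) q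
  -- means equal 1
  have hmean1 : ∑ k ∈ range (n+2), (k:ℝ) * bp n p k = 1 := by
    obtain ⟨r, rfl⟩ : ∃ r, n = r + 1 := ⟨n - 1, by omega⟩
    rw [Finset.sum_range_succ, bp_zero_of_gt (r+1) (r+2) p (by omega), mul_zero, add_zero]
    rw [bp_mean r p, hp]
    field_simp
    push_cast; ring
  have hmean2 : ∑ k ∈ range (n+2), (k:ℝ) * bp (n+1) q k = 1 := by
    rw [bp_mean n q, hq]
    field_simp
  set K := n + 2 with hK
  set d : ℕ → ℝ := fun j => f (j+1) - 2*f j + f (j-1) with hd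
  set w : ℕ → ℕ → ℝ := fun k j => ((k - j : ℕ):ℝ) with hw
  have hexp : ∀ (g : ℕ → ℝ), (∑ k ∈ range (n+2), g k = 1) →
      (∑ k ∈ range (n+2), (k:ℝ) * g k = 1) →
      ∑ k ∈ range (n+2), g k * f k
        = f 0 + (f 1 - f 0) + ∑ j ∈ Ico 1 K, (∑ k ∈ range (n+2), g k * w k j) * d j := by
    intro g hs hm
    have hterm : ∀ k ∈ range (n+2), g k * f k
        = g k * f 0 + (g k * (k:ℝ)) * (f 1 - f 0) + ∑ j ∈ Ico 1 K, (g k * w k j) * d j := by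
      intro k hk
      simp only [mem_range] at hk
      rw [taylor f K k (by omega), mul_add, mul_add, Finset.mul_sum]
      have h1 : g k * ((k:ℝ) * (f 1 - f 0)) = (g k * (k:ℝ)) * (f 1 - f 0) := by ring
      rw [h1]
      congr 1
      apply sum_congr rfl
      intro j _
      simp only [hw, hd]
      ring
    rw [sum_congr rfl hterm]
    rw [Finset.sum_add_distrib, Finset.sum_add_distrib]
    rw [← Finset.sum_mul, ← Finset.sum_mul, hs]
    have hm' : ∑ k ∈ range (n+2), g k * (k:ℝ) = 1 := by
      rw [← hm]; apply sum_congr rfl; intro k _; ring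
    rw [hm', Finset.sum_comm]
    congr 1
    · ring
    · apply sum_congr rfl; intro j _
      rw [← Finset.sum_mul]
  rw [hexp (fun k => bp n p k) hsum1 hmean1,
      hexp (fun k => bp (n+1) q k) hsum2 hmean2]
  apply add_le_add_right
  apply Finset.sum_le_sum
  intro j hj
  simp only [mem_Ico] at hj
  apply mul_le_mul_of_nonneg_right _ (hconv j hj.1)
  -- tail rewriting
  have hrep : ∀ (g : ℕ → ℝ), ∑ k ∈ range (n+2), g k * w k j
      = ∑ i ∈ Ico j (n+1), ∑ k ∈ range (n+2), (if i < k then g k else 0) := by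
    intro g
    rw [Finset.sum_comm]
    apply sum_congr rfl
    intro k hk
    simp only [mem_range] at hk
    have hfil : (Ico j (n+1)).filter (fun i => i < k) = Ico j k := by
      ext i
      simp only [mem_Ico, mem_filter]
      omega
    calc g k * w k j = ((Ico j (n+1)).filter (fun i => i < k)).card * g k := by
          simp only [hw]
          rw [hfil, Nat.card_Ico]
          ring
      _ = ∑ i ∈ Ico j (n+1), (if i < k then g k else 0) := by
          rw [← Finset.sum_filter, Finset.sum_const, nsmul_eq_mul]
  rw [hrep, hrep]
  apply Finset.sum_le_sum
  intro i hi
  simp only [mem_Ico] at hi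
  have hi1 : 1 ≤ i := le_trans hj.1 hi.1
  rcases Nat.lt_or_ge i 2 with hi2 | hi2
  · -- i = 1
    have hieq : i = 1 := by omega
    subst hieq
    have hU : ∀ (g : ℕ → ℝ), ∑ k ∈ range (n+2), (if 1 < k then g k else 0)
        = (∑ k ∈ range (n+2), g k) - g 0 - g 1 := by
      intro g
      rw [Finset.sum_range_succ' _ (n+1), Finset.sum_range_succ' (fun i => if 1 < i+1 then g (i+1) else 0) n]
      simp only [Nat.lt_irrefl, if_neg]
      norm_num
      rw [Finset.sum_range_succ' g (n+1), Finset.sum_range_succ' (fun i => g (i+1)) n]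
      norm_num
      try ring
    rw [hU, hU, hsum1, hsum2]
    have := claimB_pmf n hn
    simp only [hp, hq] at *
    linarith [this]
  · -- i ≥ 2 : termwise
    apply Finset.sum_le_sum
    intro k _
    by_cases hik : i < k
    · rw [if_pos hik, if_pos hik]
      exact claimA_pmf n hn k (by omega)
    · rw [if_neg hik, if_neg hik]
lemma int_eq_sum {Ω : Type*} {mΩ : MeasurableSpace Ω} (μ : Measure Ω) [IsProbabilityMeasure μ]
    (N : Ω → ℕ) (hN : Measurable N) (M : ℕ) (ρ : ℕ → ℝ) (hρ0 : ∀ k, 0 ≤ ρ k)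
    (hdist : ∀ k, μ {ω | N ω = k} = ENNReal.ofReal (ρ k))
    (hsum : ∑ k ∈ Finset.range M, ρ k = 1) (f : ℝ → ℝ) :
    ∫ ω, f ((N ω : ℝ)) ∂μ = ∑ k ∈ Finset.range M, ρ k * f k := by
  have hsets : ∀ k : ℕ, MeasurableSet {ω | N ω = k} := by
    intro k
    exact hN (measurableSet_singleton k)
  set A : Set Ω := ⋃ k ∈ Finset.range M, {ω | N ω = k} with hA
  have hAmeas : MeasurableSet A := by
    apply Finset.measurableSet_biUnion
    intro k _
    exact hsets k
  have hdisj : (Finset.range M : Set ℕ).PairwiseDisjoint (fun k => {ω | N ω = k}) := by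
    intro a _ b _ hab
    apply Set.disjoint_left.2
    intro ω ha hb
    simp only [Set.mem_setOf_eq] at ha hb
    exact hab (ha ▸ hb ▸ rfl)
  have hmeasA : μ A = 1 := by
    rw [hA, measure_biUnion_finset hdisj (fun k _ => hsets k)]
    calc ∑ k ∈ Finset.range M, μ {ω | N ω = k}
        = ∑ k ∈ Finset.range M, ENNReal.ofReal (ρ k) := by
          apply Finset.sum_congr rfl; intro k _; exact hdist k
      _ = ENNReal.ofReal (∑ k ∈ Finset.range M, ρ k) := by
          rw [ENNReal.ofReal_sum_of_nonneg (fun k _ => hρ0 k)]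
      _ = 1 := by rw [hsum]; simp
  have hcompl : μ Aᶜ = 0 := by
    rw [measure_compl hAmeas (measure_ne_top μ A), hmeasA, measure_univ]
    simp
  have hae : ∀ᵐ ω ∂μ, ω ∈ A := by
    rw [MeasureTheory.ae_iff]
    have : {ω | ¬ ω ∈ A} = Aᶜ := rfl
    rw [this]
    exact hcompl
  have haeeq : (fun ω => f ((N ω : ℝ)))
      =ᵐ[μ] (fun ω => ∑ k ∈ Finset.range M, Set.indicator {ω' | N ω' = k} (fun _ => f k) ω) := by
    filter_upwards [hae] with ω hω
    simp only [hA, Set.mem_iUnion, Finset.mem_range, Set.mem_setOf_eq] at hω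
    obtain ⟨k₀, hk₀, hNω⟩ := hω
    have : ∀ k, Set.indicator {ω' | N ω' = k} (fun _ => f k) ω = if N ω = k then f k else 0 := by
      intro k
      rw [Set.indicator_apply]
      simp only [Set.mem_setOf_eq]
    rw [Finset.sum_congr rfl (fun k _ => this k)]
    rw [Finset.sum_ite_eq (Finset.range M) (N ω) (fun k => f k)]
    rw [if_pos (by rw [hNω]; exact Finset.mem_range.2 hk₀)]
  rw [integral_congr_ae haeeq]
  rw [MeasureTheory.integral_finset_sum]
  · apply Finset.sum_congr rfl
    intro k _
    rw [MeasureTheory.integral_indicator_const (f k : ℝ) (hsets k)]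
    rw [measureReal_def, hdist k, ENNReal.toReal_ofReal (hρ0 k)]
    simp [mul_comm]
  · intro k _
    apply (integrable_indicator_iff (hsets k)).2
    exact integrableOn_const (measure_lt_top μ _).ne

/-- the family Binomial(n, 1/n) is convexly increasing in n. -/
theorem binomial_cx_increasing {Ω : Type*} {mΩ : MeasurableSpace Ω}
    (μ : Measure Ω) [IsProbabilityMeasure μ]
    (n : ℕ) (hn : 1 ≤ n)
    (N₁ N₂ : Ω → ℕ) (hN₁ : Measurable N₁) (hN₂ : Measurable N₂)
    (hN₁dist : ∀ k : ℕ,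
      μ {ω | N₁ ω = k} = ENNReal.ofReal
        ((n.choose k : ℝ) * (1 / n) ^ k * (1 - 1 / n) ^ (n - k)))
    (hN₂dist : ∀ k : ℕ,
      μ {ω | N₂ ω = k} = ENNReal.ofReal
        (((n + 1).choose k : ℝ) * (1 / (n + 1)) ^ k * (1 - 1 / (n + 1)) ^ (n + 1 - k))) :
    ∀ f : ℝ → ℝ, ConvexOn ℝ Set.univ f →
      Integrable (fun ω => f (N₁ ω)) μ → Integrable (fun ω => f (N₂ ω)) μ →
      ∫ ω, f (N₁ ω) ∂μ ≤ ∫ ω, f (N₂ ω) ∂μ := by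
  intro f hf _ _
  have hnpos : (0:ℝ) < (n:ℝ) := by exact_mod_cast hn
  have hp1 : (1:ℝ)/(n:ℝ) ≤ 1 := by rw [div_le_one hnpos]; exact_mod_cast hn
  have hq1 : (1:ℝ)/((n:ℝ)+1) ≤ 1 := by rw [div_le_one (by linarith)]; linarith
  have hρ1 : ∀ k, 0 ≤ bp n (1/(n:ℝ)) k :=
    bp_nonneg n _ (by positivity) hp1
  have hρ2 : ∀ k, 0 ≤ bp (n+1) (1/((n:ℝ)+1)) k :=
    bp_nonneg (n+1) _ (by positivity) hq1
  have hs1 : ∑ k ∈ range (n+2), bp n (1/(n:ℝ)) k = 1 := by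
    rw [Finset.sum_range_succ, bp_zero_of_gt n (n+1) _ (by omega), add_zero]
    exact bp_sum n _
  have hs2 : ∑ k ∈ range (n+2), bp (n+1) (1/((n:ℝ)+1)) k = 1 := bp_sum (n+1) _
  have e1 : ∫ ω, f (N₁ ω) ∂μ = ∑ k ∈ range (n+2), bp n (1/(n:ℝ)) k * f k :=
    int_eq_sum μ N₁ hN₁ (n+2) _ hρ1 (fun k => by simpa [bp] using hN₁dist k) hs1 f
  have e2 : ∫ ω, f (N₂ ω) ∂μ = ∑ k ∈ range (n+2), bp (n+1) (1/((n:ℝ)+1)) k * f k :=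
    int_eq_sum μ N₂ hN₂ (n+2) _ hρ2 (fun k => by simpa [bp] using hN₂dist k) hs2 f
  rw [e1, e2]
  apply sum_ineq n hn (fun k : ℕ => f (k:ℝ))
  intro j hj
  have hx : (((j-1:ℕ)):ℝ) = (j:ℝ) - 1 := by
    rw [Nat.cast_sub hj, Nat.cast_one]
  have key := hf.2 (Set.mem_univ ((j:ℝ)-1)) (Set.mem_univ ((j:ℝ)+1))
    (by norm_num : (0:ℝ) ≤ 1/2) (by norm_num : (0:ℝ) ≤ 1/2) (by norm_num)
  simp only [smul_eq_mul] at key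
  have hmid : (1/2:ℝ) * ((j:ℝ)-1) + (1/2:ℝ) * ((j:ℝ)+1) = (j:ℝ) := by ring
  rw [hmid] at key
  have hc1 : (((j+1:ℕ)):ℝ) = (j:ℝ) + 1 := by push_cast; ring
  rw [hc1, hx]
  linarith
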